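/- Let p be an odd prime, R = F_p[u]/(u^2), θ an automorphism of R, and C a nonzero skew cyclic code of length n over R containing no monic polynomials. If a(x) = u·ā(x) is a polynomial of minimal degree in C with ā(x) ∈ F_p[x], then C = ⟨u ā(x)⟩ as a left R[x;θ]-submodule, and ā(x) divides x^n − 1 in F_p[x]. -/

import Mathlib

open TrivSqZeroExt

theorem RingAut.one_apply' {R : Type*} [Ring R] (b : R) : (1 : RingAut R) b = b := rfl

/-- The skew polynomial ring `R[x;θ]`, as finitely supported coefficient
sequences with multiplication twisted by the ring automorphism `θ`:
`(a x^i) * (b x^j) = a θ^i(b) x^{i+j}`. -/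
def SkewPoly (R : Type*) [Ring R] (θ : RingAut R) : Type _ := ℕ →₀ R

namespace SkewPoly

variable {R : Type*} [Ring R] (θ : RingAut R)

/-- The skew-twisted convolution product. -/
noncomputable def mulAux (f g : ℕ →₀ R) : ℕ →₀ R :=
  f.sum fun i a => g.sum fun j b => Finsupp.single (i + j) (a * (θ ^ i) b)

theorem mulAux_zero_left (g : ℕ →₀ R) : mulAux θ 0 g = 0 := Finsupp.sum_zero_index

theorem mulAux_zero_right (f : ℕ →₀ R) : mulAux θ f 0 = 0 := by
  simp [mulAux, Finsupp.sum_zero_index]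

theorem mulAux_add_left (f f' g : ℕ →₀ R) :
    mulAux θ (f + f') g = mulAux θ f g + mulAux θ f' g := by
  unfold mulAux
  apply Finsupp.sum_add_index' <;> intros <;> simp [add_mul, Finsupp.single_add, Finsupp.sum_add]

theorem mulAux_add_right (f g g' : ℕ →₀ R) :
    mulAux θ f (g + g') = mulAux θ f g + mulAux θ f g' := by
  unfold mulAux
  rw [← Finsupp.sum_add]
  apply Finsupp.sum_congr
  intro i _
  apply Finsupp.sum_add_index' <;> intros <;> simp [mul_add, Finsupp.single_add]

theorem one_mulAux (g : ℕ →₀ R) : mulAux θ (Finsupp.single 0 1) g = g := by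
  unfold mulAux
  rw [Finsupp.sum_single_index]
  · simp [RingAut.one_apply', Finsupp.sum_single]
  · simp

theorem mulAux_one (f : ℕ →₀ R) : mulAux θ f (Finsupp.single 0 1) = f := by
  unfold mulAux
  have : ∀ i ∈ f.support, ((Finsupp.single 0 1 : ℕ →₀ R).sum fun j b =>
      Finsupp.single (i + j) (f i * (θ ^ i) b)) = Finsupp.single i (f i) := by
    intro i _
    rw [Finsupp.sum_single_index] <;> simp
  rw [Finsupp.sum_congr this, Finsupp.sum_single f]

theorem mulAux_single_single (i j : ℕ) (a b : R) :
    mulAux θ (Finsupp.single i a) (Finsupp.single j b) =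
      Finsupp.single (i + j) (a * (θ ^ i) b) := by
  unfold mulAux
  rw [Finsupp.sum_single_index, Finsupp.sum_single_index]
  · simp
  · rw [Finsupp.sum_single_index] <;> simp

theorem mulAux_assoc (f g h : ℕ →₀ R) :
    mulAux θ (mulAux θ f g) h = mulAux θ f (mulAux θ g h) := by
  induction f using Finsupp.induction_linear with
  | zero => simp [mulAux_zero_left]
  | add f f' hf hf' => simp [mulAux_add_left, hf, hf']
  | single i a =>
    induction g using Finsupp.induction_linear with
    | zero => simp [mulAux_zero_left, mulAux_zero_right]
    | add g g' hg hg' => simp [mulAux_add_left, mulAux_add_right, hg, hg']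
    | single j b =>
      induction h using Finsupp.induction_linear with
      | zero => simp [mulAux_zero_right]
      | add h h' hh hh' => simp [mulAux_add_right, hh, hh']
      | single k c =>
        rw [mulAux_single_single, mulAux_single_single, mulAux_single_single,
          mulAux_single_single]
        rw [add_assoc, mul_assoc, map_mul, pow_add]
        rfl

variable {θ}

noncomputable instance : AddCommGroup (SkewPoly R θ) := inferInstanceAs (AddCommGroup (ℕ →₀ R))

/-- Reinterpret a skew polynomial as a finitely supported function. -/
def toFinsupp (f : SkewPoly R θ) : ℕ →₀ R := f

/-- Build a skew polynomial out of a finitely supported function. -/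
def ofFinsupp (f : ℕ →₀ R) : SkewPoly R θ := f

noncomputable instance : Ring (SkewPoly R θ) where
  __ := (inferInstance : AddCommGroup (SkewPoly R θ))
  mul f g := mulAux θ (toFinsupp f) (toFinsupp g)
  one := Finsupp.single 0 1
  left_distrib f g h := mulAux_add_right θ (toFinsupp f) (toFinsupp g) (toFinsupp h)
  right_distrib f g h := mulAux_add_left θ (toFinsupp f) (toFinsupp g) (toFinsupp h)
  zero_mul := mulAux_zero_left θ
  mul_zero := mulAux_zero_right θ
  mul_assoc := mulAux_assoc θ
  one_mul := one_mulAux θ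
  mul_one := mulAux_one θ

variable (θ) in
/-- The constant skew polynomial `a`. -/
noncomputable def C (a : R) : SkewPoly R θ := ofFinsupp (Finsupp.single 0 a)

variable (θ) in
/-- The variable `x` of the skew polynomial ring. -/
noncomputable def X : SkewPoly R θ := ofFinsupp (Finsupp.single 1 1)

/-- The `n`-th coefficient of a skew polynomial. -/
def coeff (f : SkewPoly R θ) (n : ℕ) : R := toFinsupp f n

/-- The degree of a skew polynomial (`⊥` for the zero polynomial). -/
def degree (f : SkewPoly R θ) : WithBot ℕ := (toFinsupp f).support.max

/-- The degree of a skew polynomial as a natural number. -/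
def natDegree (f : SkewPoly R θ) : ℕ := WithBot.unbotD 0 (degree f)

/-- The leading coefficient of a skew polynomial. -/
def leadingCoeff (f : SkewPoly R θ) : R := coeff f (natDegree f)

/-- A skew polynomial is monic if its leading coefficient is `1`. -/
def Monic (f : SkewPoly R θ) : Prop := leadingCoeff f = 1

end SkewPoly

/-- The inclusion of `F_p[x]` into the skew polynomial ring
`(F_p + u F_p)[x;θ]` (coefficientwise `a ↦ a + u·0`); this is the natural
embedding of `F_p[x]` as a subring of `R[x;θ]` since `θ` fixes `F_p`. -/
noncomputable def SkewPoly.ofPoly {p : ℕ}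
    (θ : RingAut (DualNumber (ZMod p))) (f : Polynomial (ZMod p)) :
    SkewPoly (DualNumber (ZMod p)) θ :=
  SkewPoly.ofFinsupp
    (Finsupp.mapRange (inl : ZMod p → DualNumber (ZMod p)) (inl_zero (ZMod p)) f.toFinsupp.coeff)

/-- Reduction of a skew polynomial over `F_p + u F_p` modulo `u`, i.e. the
polynomial in `F_p[x]` whose coefficients are the first components of the
coefficients. -/
noncomputable def SkewPoly.fstPoly {p : ℕ}
    {θ : RingAut (DualNumber (ZMod p))} (f : SkewPoly (DualNumber (ZMod p)) θ) :
    Polynomial (ZMod p) :=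
  Polynomial.ofFinsupp (AddMonoidAlgebra.ofCoeff
    (Finsupp.mapRange TrivSqZeroExt.fst fst_zero (SkewPoly.toFinsupp f)))

namespace SkewPoly

section Generic
variable {R : Type*} [Ring R] {θ : RingAut R}

theorem mul_def (f g : SkewPoly R θ) :
    f * g = ofFinsupp (mulAux θ (toFinsupp f) (toFinsupp g)) := rfl

theorem toFinsupp_ofFinsupp (s : ℕ →₀ R) : toFinsupp (ofFinsupp s : SkewPoly R θ) = s := rfl

theorem single_mul_single (i j : ℕ) (a b : R) :
    (ofFinsupp (Finsupp.single i a) : SkewPoly R θ) * ofFinsupp (Finsupp.single j b)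
      = ofFinsupp (Finsupp.single (i + j) (a * (θ ^ i) b)) :=
  mulAux_single_single θ i j a b

theorem toFinsupp_C_mul (c : R) (f : SkewPoly R θ) :
    toFinsupp (C θ c * f) = c • toFinsupp f := by
  show mulAux θ (Finsupp.single 0 c) (toFinsupp f) = c • toFinsupp f
  unfold mulAux
  rw [Finsupp.sum_single_index (by simp)]
  rw [← Finsupp.sum_single (toFinsupp f), Finsupp.smul_sum]
  simp [Finsupp.smul_single, RingAut.one_apply']

theorem coeff_C_mul (c : R) (f : SkewPoly R θ) (k : ℕ) :
    coeff (C θ c * f) k = c * coeff f k := by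
  show toFinsupp (C θ c * f) k = c * toFinsupp f k
  rw [toFinsupp_C_mul]; rfl

theorem X_pow (k : ℕ) : (X θ) ^ k = ofFinsupp (Finsupp.single k 1) := by
  induction k with
  | zero => rfl
  | succ k ih =>
    rw [pow_succ, ih]
    show _ * X θ = _
    rw [X, single_mul_single]
    simp

/-- View a skew polynomial as an ordinary polynomial (additively). -/
def toP (f : SkewPoly R θ) : Polynomial R := ⟨AddMonoidAlgebra.ofCoeff (toFinsupp f)⟩

theorem toP_injective : Function.Injective (toP (R := R) (θ := θ)) := by
  intro f g h
  have := congrArg Polynomial.toFinsupp h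
  exact congrArg AddMonoidAlgebra.coeff this

@[simp] theorem toP_zero : toP (0 : SkewPoly R θ) = 0 := rfl

theorem toP_add (f g : SkewPoly R θ) : toP (f + g) = toP f + toP g := by
  apply Polynomial.toFinsupp_injective
  rw [Polynomial.toFinsupp_add]; rfl

theorem toP_sub (f g : SkewPoly R θ) : toP (f - g) = toP f - toP g := by
  apply Polynomial.toFinsupp_injective
  rw [Polynomial.toFinsupp_sub]; rfl

theorem toP_single (i : ℕ) (a : R) :
    toP (ofFinsupp (Finsupp.single i a) : SkewPoly R θ) = Polynomial.monomial i a := by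
  apply Polynomial.toFinsupp_injective
  rw [Polynomial.toFinsupp_monomial]; rfl

theorem degree_eq (f : SkewPoly R θ) : degree f = (toP f).degree := rfl

theorem coeff_eq (f : SkewPoly R θ) (k : ℕ) : coeff f k = (toP f).coeff k := rfl

theorem natDegree_eq (f : SkewPoly R θ) : natDegree f = (toP f).natDegree := rfl

theorem leadingCoeff_eq (f : SkewPoly R θ) : leadingCoeff f = (toP f).leadingCoeff := rfl

theorem monic_iff (f : SkewPoly R θ) : Monic f ↔ (toP f).Monic := Iff.rfl

theorem toP_eq_zero_iff (f : SkewPoly R θ) : toP f = 0 ↔ f = 0 := by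
  constructor
  · intro h; exact toP_injective (by simpa using h)
  · rintro rfl; rfl

end Generic
end SkewPoly

namespace SkewPoly

section Dual
variable {p : ℕ} [Fact p.Prime] {θ : RingAut (DualNumber (ZMod p))}

open DualNumber

theorem inr_eq_zero {c : ZMod p} : (inr c : DualNumber (ZMod p)) = 0 ↔ c = 0 := by
  constructor
  · intro h; exact inr_injective (by rw [h, inr_zero])
  · rintro rfl; exact inr_zero _

theorem eps_def : (ε : DualNumber (ZMod p)) = inr 1 := rfl

theorem inr_eq_mul_eps (c : ZMod p) : (inr c : DualNumber (ZMod p)) = inl c * ε := by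
  rw [eps_def, inl_mul_inr, smul_eq_mul, mul_one]

theorem theta_inl (c : ZMod p) : θ (inl c) = inl c := by
  obtain ⟨m, rfl⟩ := ZMod.natCast_zmod_surjective (n := p) c
  rw [inl_natCast, map_natCast]

theorem theta_pow_inl (i : ℕ) (c : ZMod p) : (θ ^ i) (inl c) = inl c := by
  induction i with
  | zero => rfl
  | succ i ih => rw [pow_succ]; show (θ ^ i) (θ (inl c)) = _; rw [theta_inl, ih]

theorem exists_lam : ∃ lam : ZMod p, lam ≠ 0 ∧ ∀ c : ZMod p, θ (inr c) = inr (lam * c) := by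
  have hsq : θ ε * θ ε = 0 := by rw [← map_mul, eps_mul_eps, map_zero]
  have hfst : fst (θ ε) = 0 := by
    have h1 : fst (θ ε) * fst (θ ε) = 0 := by rw [← fst_mul, hsq, fst_zero]
    exact mul_self_eq_zero.mp h1
  have heps : θ ε = inr (snd (θ ε)) := by
    conv_lhs => rw [← inl_fst_add_inr_snd_eq (θ ε)]
    rw [hfst, inl_zero, zero_add]
  refine ⟨snd (θ ε), ?_, ?_⟩
  · intro h
    rw [h, inr_zero] at heps
    have h0 : (ε : DualNumber (ZMod p)) = 0 := θ.injective (heps.trans (map_zero θ).symm)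
    rw [eps_def, inr_eq_zero] at h0
    exact one_ne_zero h0
  · intro c
    rw [inr_eq_mul_eps, map_mul, theta_inl, heps, inl_mul_inr, smul_eq_mul, mul_comm, snd_inr]

theorem theta_pow_inr {lam : ZMod p} (hl : ∀ c : ZMod p, θ (inr c) = inr (lam * c))
    (i : ℕ) : ∀ c : ZMod p, (θ ^ i) (inr c) = inr (lam ^ i * c) := by
  induction i with
  | zero => intro c; rw [pow_zero, RingAut.one_apply', pow_zero, one_mul]
  | succ i ih =>
    intro c
    rw [pow_succ]
    show (θ ^ i) (θ (inr c)) = _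
    rw [hl, ih (lam * c)]
    congr 1
    ring

/-- `u·g` for `g ∈ F_p[x]`. -/
noncomputable def umap (θ : RingAut (DualNumber (ZMod p))) (g : Polynomial (ZMod p)) :
    SkewPoly (DualNumber (ZMod p)) θ :=
  ofFinsupp (Finsupp.mapRange (inr : ZMod p → DualNumber (ZMod p)) (inr_zero (ZMod p))
    g.toFinsupp.coeff)

theorem coeff_umap (g : Polynomial (ZMod p)) (k : ℕ) :
    coeff (umap θ g) k = inr (g.coeff k) := by
  show (Finsupp.mapRange (inr : ZMod p → DualNumber (ZMod p)) (inr_zero (ZMod p))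
    g.toFinsupp.coeff) k = _
  rw [Finsupp.mapRange_apply]
  rfl

theorem umap_add (g h : Polynomial (ZMod p)) :
    umap θ (g + h) = umap θ g + umap θ h := by
  show (Finsupp.mapRange (inr : ZMod p → DualNumber (ZMod p)) (inr_zero (ZMod p))
      (g + h).toFinsupp.coeff) = Finsupp.mapRange inr (inr_zero _) g.toFinsupp.coeff
        + Finsupp.mapRange inr (inr_zero _) h.toFinsupp.coeff
  rw [Polynomial.toFinsupp_add, AddMonoidAlgebra.coeff_add]
  exact Finsupp.mapRange_add (fun a b => inr_add _ a b) _ _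

theorem umap_single (i : ℕ) (c : ZMod p) :
    umap θ (Polynomial.monomial i c) = ofFinsupp (Finsupp.single i (inr c)) := by
  unfold umap
  congr 1
  rw [Polynomial.toFinsupp_monomial, AddMonoidAlgebra.coeff_single, Finsupp.mapRange_single]

theorem umap_zero : umap θ (0 : Polynomial (ZMod p)) = 0 := by
  show (Finsupp.mapRange (inr : ZMod p → DualNumber (ZMod p)) (inr_zero (ZMod p))
      (0 : Polynomial (ZMod p)).toFinsupp.coeff) = (0 : ℕ →₀ DualNumber (ZMod p))
  rw [Polynomial.toFinsupp_zero, AddMonoidAlgebra.coeff_zero, Finsupp.mapRange_zero]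

theorem umap_eq_zero_iff (g : Polynomial (ZMod p)) : umap θ g = 0 ↔ g = 0 := by
  constructor
  · intro h
    apply Polynomial.toFinsupp_injective
    ext k
    have h2 := congrArg (fun f : SkewPoly (DualNumber (ZMod p)) θ => coeff f k) h
    simp only [coeff_umap] at h2
    have : (inr (g.coeff k) : DualNumber (ZMod p)) = 0 := h2
    rw [inr_eq_zero] at this
    simpa [Polynomial.toFinsupp_apply] using this
  · rintro rfl; exact umap_zero

theorem support_umap (g : Polynomial (ZMod p)) :
    (toFinsupp (umap θ g)).support = g.support := by
  ext k
  simp only [Finsupp.mem_support_iff, Polynomial.mem_support_iff]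
  rw [show toFinsupp (umap θ g) k = inr (g.coeff k) from coeff_umap g k]
  rw [not_iff_not.symm, not_not, not_not, inr_eq_zero]

theorem degree_umap (g : Polynomial (ZMod p)) : degree (umap θ g) = g.degree := by
  unfold degree Polynomial.degree
  rw [support_umap]

theorem natDegree_umap (g : Polynomial (ZMod p)) : natDegree (umap θ g) = g.natDegree := by
  unfold natDegree Polynomial.natDegree
  rw [degree_umap]

theorem leadingCoeff_umap (g : Polynomial (ZMod p)) :
    leadingCoeff (umap θ g) = inr g.leadingCoeff := by
  unfold leadingCoeff Polynomial.leadingCoeff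
  rw [natDegree_umap]
  exact coeff_umap g g.natDegree

theorem ofPoly_monomial (i : ℕ) (c : ZMod p) :
    ofPoly θ (Polynomial.monomial i c) = ofFinsupp (Finsupp.single i (inl c)) := by
  unfold ofPoly
  congr 1
  rw [Polynomial.toFinsupp_monomial, AddMonoidAlgebra.coeff_single, Finsupp.mapRange_single]

theorem ofPoly_add (g h : Polynomial (ZMod p)) :
    ofPoly θ (g + h) = ofPoly θ g + ofPoly θ h := by
  show (Finsupp.mapRange (inl : ZMod p → DualNumber (ZMod p)) (inl_zero (ZMod p))
      (g + h).toFinsupp.coeff) = Finsupp.mapRange inl (inl_zero _) g.toFinsupp.coeff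
        + Finsupp.mapRange inl (inl_zero _) h.toFinsupp.coeff
  rw [Polynomial.toFinsupp_add, AddMonoidAlgebra.coeff_add]
  exact Finsupp.mapRange_add (fun a b => inl_add _ a b) _ _

theorem C_eps_mul_ofPoly (g : Polynomial (ZMod p)) :
    C θ ε * ofPoly θ g = umap θ g := by
  induction g using Polynomial.induction_on' with
  | add f g hf hg => rw [ofPoly_add, mul_add, hf, hg, umap_add]
  | monomial i c =>
    rw [ofPoly_monomial, umap_single]
    show (ofFinsupp (Finsupp.single 0 (ε : DualNumber (ZMod p))) : SkewPoly _ θ) * _ = _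
    rw [single_mul_single]
    have h1 : (ε : DualNumber (ZMod p)) * (θ ^ 0) (inl c) = inr c := by
      rw [pow_zero, RingAut.one_apply', inr_eq_mul_eps]
      exact mul_comm _ _
    rw [zero_add, h1]

/-- Multiplying `u·h` on the left by `d x^i` (with `d ∈ F_p`). -/
theorem single_inl_mul_umap {lam : ZMod p} (hl : ∀ c : ZMod p, θ (inr c) = inr (lam * c))
    (i : ℕ) (d : ZMod p) (h : Polynomial (ZMod p)) :
    (ofFinsupp (Finsupp.single i (inl d)) : SkewPoly _ θ) * umap θ h
      = umap θ (Polynomial.monomial i (d * lam ^ i) * h) := by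
  induction h using Polynomial.induction_on' with
  | add f g hf hg => rw [umap_add, mul_add, hf, hg, mul_add, umap_add]
  | monomial j c =>
    rw [umap_single, single_mul_single, theta_pow_inr hl, inl_mul_inr, smul_eq_mul,
      Polynomial.monomial_mul_monomial, umap_single]
    congr 2
    ring

theorem exists_mul_umap {lam : ZMod p} (hlne : lam ≠ 0)
    (hl : ∀ c : ZMod p, θ (inr c) = inr (lam * c)) (g h : Polynomial (ZMod p)) :
    ∃ Q : SkewPoly (DualNumber (ZMod p)) θ, Q * umap θ h = umap θ (g * h) := by
  induction g using Polynomial.induction_on' with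
  | add f g hf hg =>
    obtain ⟨Q1, hQ1⟩ := hf
    obtain ⟨Q2, hQ2⟩ := hg
    exact ⟨Q1 + Q2, by rw [add_mul, hQ1, hQ2, add_mul, umap_add]⟩
  | monomial i c =>
    refine ⟨ofFinsupp (Finsupp.single i (inl (c * (lam ^ i)⁻¹))), ?_⟩
    rw [single_inl_mul_umap hl]
    congr 2
    field_simp
  
theorem umap_sub (g h : Polynomial (ZMod p)) :
    umap θ (g - h) = umap θ g - umap θ h := by
  show (Finsupp.mapRange (inr : ZMod p → DualNumber (ZMod p)) (inr_zero (ZMod p))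
      (g - h).toFinsupp.coeff) = Finsupp.mapRange inr (inr_zero _) g.toFinsupp.coeff
        - Finsupp.mapRange inr (inr_zero _) h.toFinsupp.coeff
  rw [Polynomial.toFinsupp_sub, AddMonoidAlgebra.coeff_sub]
  exact Finsupp.mapRange_sub (fun a b => inr_sub (R := ZMod p) a b) _ _

end Dual
end SkewPoly

namespace SkewPoly
section Generic2
variable {R : Type*} [Ring R] {θ : RingAut R}

theorem mkQ_mul (I : Ideal (SkewPoly R θ)) (q f : SkewPoly R θ) :
    I.mkQ (q * f) = q • I.mkQ f := by
  rw [← smul_eq_mul, map_smul]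

theorem monic_scale {f : SkewPoly R θ} (hf0 : f ≠ 0) (hu : IsUnit (leadingCoeff f)) :
    ∃ v : R, Monic (C θ v * f) ∧ degree (C θ v * f) = degree f := by
  obtain ⟨u, hu⟩ := hu
  refine ⟨(↑u⁻¹ : R), ?_, ?_⟩
  · have hsupp : (toFinsupp (C θ (↑u⁻¹ : R) * f)).support = (toFinsupp f).support := by
      rw [toFinsupp_C_mul]
      ext k
      simp only [Finsupp.mem_support_iff, Finsupp.smul_apply, smul_eq_mul]
      constructor
      · intro h hk; exact h (by rw [hk, mul_zero])
      · intro h hk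
        apply h
        have := congrArg (fun x => (↑u : R) * x) hk
        simpa [← mul_assoc, Units.mul_inv_cancel_left] using this
    have hdeg : degree (C θ (↑u⁻¹ : R) * f) = degree f := by
      unfold degree; rw [hsupp]
    have hnd : natDegree (C θ (↑u⁻¹ : R) * f) = natDegree f := by
      unfold natDegree; rw [hdeg]
    unfold Monic leadingCoeff
    rw [hnd, coeff_C_mul]
    have hlc : f.coeff f.natDegree = leadingCoeff f := rfl
    rw [hlc, ← hu, Units.inv_mul]
  · have hsupp : (toFinsupp (C θ (↑u⁻¹ : R) * f)).support = (toFinsupp f).support := by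
      rw [toFinsupp_C_mul]
      ext k
      simp only [Finsupp.mem_support_iff, Finsupp.smul_apply, smul_eq_mul]
      constructor
      · intro h hk; exact h (by rw [hk, mul_zero])
      · intro h hk
        apply h
        have := congrArg (fun x => (↑u : R) * x) hk
        simpa [← mul_assoc, Units.mul_inv_cancel_left] using this
    unfold degree; rw [hsupp]

theorem degree_eq_natDegree {f : SkewPoly R θ} (hf : f ≠ 0) :
    degree f = (natDegree f : WithBot ℕ) := by
  rw [degree_eq, natDegree_eq]
  exact Polynomial.degree_eq_natDegree (fun h => hf ((toP_eq_zero_iff f).mp h))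

theorem exists_rep {n : ℕ} (hn : 0 < n) (f : SkewPoly R θ) :
    ∃ r : SkewPoly R θ, f - r ∈ Ideal.span {X θ ^ n - 1} ∧ degree r < (n : WithBot ℕ) := by
  suffices H : ∀ m : ℕ, ∀ f : SkewPoly R θ, natDegree f < m →
      ∃ r : SkewPoly R θ, f - r ∈ Ideal.span {X θ ^ n - 1} ∧ degree r < (n : WithBot ℕ) from
    H (natDegree f + 1) f (Nat.lt_succ_self _)
  intro m
  induction m with
  | zero => intro f hf; exact absurd hf (Nat.not_lt_zero _)
  | succ m ih =>
    intro f hfm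
    by_cases hdeg : degree f < (n : WithBot ℕ)
    · exact ⟨f, by rw [sub_self]; exact zero_mem _, hdeg⟩
    · have hf0 : f ≠ 0 := by
        rintro rfl
        apply hdeg
        show degree (0 : SkewPoly R θ) < _
        rw [degree_eq, toP_zero, Polynomial.degree_zero]
        exact WithBot.bot_lt_coe n
      have hmd : degree f = (natDegree f : WithBot ℕ) := degree_eq_natDegree hf0
      have hnle : n ≤ natDegree f := by
        have := le_of_not_gt hdeg
        rw [hmd] at this
        exact_mod_cast this
      set M := natDegree f with hM
      set c := coeff f M with hc
      have hc0 : c ≠ 0 := by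
        have : (toP f).leadingCoeff ≠ 0 :=
          Polynomial.leadingCoeff_ne_zero.mpr (fun h => hf0 ((toP_eq_zero_iff f).mp h))
        exact this
      have hs : (ofFinsupp (Finsupp.single (M - n) c) : SkewPoly R θ) * (X θ ^ n - 1)
          = ofFinsupp (Finsupp.single M c) - ofFinsupp (Finsupp.single (M - n) c) := by
        rw [mul_sub, mul_one, X_pow, single_mul_single, map_one, mul_one,
          Nat.sub_add_cancel hnle]
      set g := f - ofFinsupp (Finsupp.single (M - n) c) * (X θ ^ n - 1) with hg
      have hmem : f - g ∈ Ideal.span {X θ ^ n - 1} := by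
        rw [hg, sub_sub_cancel]
        exact Submodule.mem_span_singleton.mpr ⟨ofFinsupp (Finsupp.single (M - n) c), by rw [smul_eq_mul]⟩
      have hgP : toP g = (toP f - Polynomial.monomial M c) + Polynomial.monomial (M - n) c := by
        rw [hg, toP_sub, hs, toP_sub, toP_single, toP_single]
        abel
      have hdg : degree g < (M : WithBot ℕ) := by
        rw [degree_eq, hgP]
        apply lt_of_le_of_lt (Polynomial.degree_add_le _ _)
        apply max_lt
        · have hdd : degree f = (toP f).degree := degree_eq f
          rw [← hmd, hdd]
          apply Polynomial.degree_sub_lt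
          · rw [Polynomial.degree_monomial _ hc0, ← hdd, hmd]
          · exact fun h => hf0 ((toP_eq_zero_iff f).mp h)
          · rw [Polynomial.leadingCoeff_monomial]
            rfl
        · apply lt_of_le_of_lt (Polynomial.degree_monomial_le _ _)
          exact_mod_cast Nat.sub_lt (lt_of_lt_of_le hn hnle) hn
      by_cases hg0 : g = 0
      · refine ⟨0, ?_, ?_⟩
        · rw [sub_zero, show f = f - g by rw [hg0, sub_zero]]
          exact hmem
        · show degree (0 : SkewPoly R θ) < _
          rw [degree_eq, toP_zero, Polynomial.degree_zero]
          exact WithBot.bot_lt_coe n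
      · have hgm : natDegree g < m := by
          have h1 : natDegree g < M := by
            have := Polynomial.natDegree_lt_natDegree
              (p := toP g) (q := toP f)
              (fun h => hg0 ((toP_eq_zero_iff g).mp h)) ?_
            · exact this
            · rw [← degree_eq, ← degree_eq, hmd]; exact hdg
          omega
        obtain ⟨r, hr1, hr2⟩ := ih g hgm
        refine ⟨r, ?_, hr2⟩
        have : f - r = (f - g) + (g - r) := by abel
        rw [this]
        exact add_mem hmem hr1

end Generic2
end SkewPoly

namespace SkewPoly
section Main
variable {p : ℕ} [Fact p.Prime] {θ : RingAut (DualNumber (ZMod p))}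

open DualNumber

set_option maxHeartbeats 1000000 in
theorem mem_span_of_mem_code {n : ℕ}
    {lam : ZMod p} (hlne : lam ≠ 0) (hl : ∀ c : ZMod p, θ (inr c) = inr (lam * c))
    (Code : Submodule (SkewPoly (DualNumber (ZMod p)) θ)
      (SkewPoly (DualNumber (ZMod p)) θ ⧸ Ideal.span {SkewPoly.X θ ^ n - 1}))
    (hnomonic : ∀ f : SkewPoly (DualNumber (ZMod p)) θ,
      (Ideal.span {SkewPoly.X θ ^ n - 1}).mkQ f ∈ Code →
        SkewPoly.degree f < (n : WithBot ℕ) → ¬ SkewPoly.Monic f)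
    (abar : Polynomial (ZMod p))
    (a : SkewPoly (DualNumber (ZMod p)) θ)
    (ha : a = umap θ abar) (ha0 : a ≠ 0)
    (haC : (Ideal.span {SkewPoly.X θ ^ n - 1}).mkQ a ∈ Code)
    (hmin : ∀ b : SkewPoly (DualNumber (ZMod p)) θ,
      (Ideal.span {SkewPoly.X θ ^ n - 1}).mkQ b ∈ Code → b ≠ 0 →
        SkewPoly.degree b < (n : WithBot ℕ) → SkewPoly.degree a ≤ SkewPoly.degree b) :
    ∀ m : ℕ, ∀ f : SkewPoly (DualNumber (ZMod p)) θ, natDegree f < m →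
      (Ideal.span {SkewPoly.X θ ^ n - 1}).mkQ f ∈ Code →
      degree f < (n : WithBot ℕ) →
      (Ideal.span {SkewPoly.X θ ^ n - 1}).mkQ f ∈ Submodule.span (SkewPoly (DualNumber (ZMod p)) θ)
        {(Ideal.span {SkewPoly.X θ ^ n - 1}).mkQ a} := by
  intro m
  induction m with
  | zero => intro f hf; exact absurd hf (Nat.not_lt_zero _)
  | succ m ih =>
    intro f hfm hfC hfdeg
    by_cases hf0 : f = 0
    · rw [hf0, map_zero]; exact zero_mem _
    have habar0 : abar ≠ 0 := fun h => ha0 (by rw [ha, h, umap_zero])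
    have hda : degree a ≤ degree f := hmin f hfC hf0 hfdeg
    have hdegaeq : degree a = abar.degree := by rw [ha, degree_umap]
    set t := abar.natDegree with htdef
    set M := natDegree f with hMdef
    have hfP0 : toP f ≠ 0 := fun h => hf0 ((toP_eq_zero_iff f).mp h)
    have hmd : degree f = (M : WithBot ℕ) := degree_eq_natDegree hf0
    have habardeg : abar.degree = (t : WithBot ℕ) := Polynomial.degree_eq_natDegree habar0
    have htM : t ≤ M := by
      have := hda
      rw [hdegaeq, habardeg, hmd] at this
      exact_mod_cast this
    -- the leading coefficient of f has zero first component
    have hfst : fst (leadingCoeff f) = 0 := by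
      by_contra hne
      have hunit : IsUnit (leadingCoeff f) :=
        isUnit_iff_isUnit_fst.mpr (isUnit_iff_ne_zero.mpr hne)
      obtain ⟨v, hv1, hv2⟩ := monic_scale hf0 hunit
      refine hnomonic (C θ v * f) ?_ (by rw [hv2]; exact hfdeg) hv1
      rw [mkQ_mul]
      exact Code.smul_mem _ hfC
    set c0 := snd (leadingCoeff f) with hc0def
    have hlc : leadingCoeff f = inr c0 := by
      conv_lhs => rw [← inl_fst_add_inr_snd_eq (leadingCoeff f)]
      rw [hfst, inl_zero, zero_add]
    have hlcne : leadingCoeff f ≠ 0 := by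
      have : (toP f).leadingCoeff ≠ 0 := Polynomial.leadingCoeff_ne_zero.mpr hfP0
      exact this
    have hc0ne : c0 ≠ 0 := fun h => hlcne (by rw [hlc, h, inr_zero])
    have hlcabar : abar.leadingCoeff ≠ 0 := Polynomial.leadingCoeff_ne_zero.mpr habar0
    set e := c0 * (abar.leadingCoeff)⁻¹ with hedef
    have hene : e ≠ 0 := mul_ne_zero hc0ne (inv_ne_zero hlcabar)
    set P := Polynomial.monomial (M - t) e * abar with hPdef
    set Q : SkewPoly (DualNumber (ZMod p)) θ :=
      ofFinsupp (Finsupp.single (M - t) (inl (e * (lam ^ (M - t))⁻¹))) with hQdef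
    have hQa : Q * a = umap θ P := by
      rw [ha, hQdef, single_inl_mul_umap hl, hPdef]
      congr 2
      field_simp
    have hPdeg : P.degree = (M : WithBot ℕ) := by
      rw [hPdef, Polynomial.degree_mul, Polynomial.degree_monomial _ hene, habardeg,
        ← Nat.cast_add, Nat.sub_add_cancel htM]
    have hPlc : P.leadingCoeff = c0 := by
      rw [hPdef, Polynomial.leadingCoeff_mul, Polynomial.leadingCoeff_monomial, hedef,
        mul_assoc, inv_mul_cancel₀ hlcabar, mul_one]
    set g := f - Q * a with hgdef
    have hgP : toP g = toP f - toP (umap θ P) := by rw [hgdef, hQa, toP_sub]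
    have hdeg_uP : (toP (umap θ P)).degree = (M : WithBot ℕ) := by
      rw [← degree_eq, degree_umap, hPdeg]
    have hlc_uP : (toP (umap θ P)).leadingCoeff = inr c0 := by
      rw [← leadingCoeff_eq, leadingCoeff_umap, hPlc]
    have hdg : degree g < degree f := by
      show (toP g).degree < (toP f).degree
      rw [hgP]
      apply Polynomial.degree_sub_lt
      · rw [hdeg_uP]; exact hmd
      · exact hfP0
      · rw [hlc_uP]; exact hlc
    have hmkg : (Ideal.span {SkewPoly.X θ ^ n - 1}).mkQ g
        = (Ideal.span {SkewPoly.X θ ^ n - 1}).mkQ f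
          - Q • (Ideal.span {SkewPoly.X θ ^ n - 1}).mkQ a := by
      rw [hgdef, map_sub, mkQ_mul]
    have hsmul_mem : Q • (Ideal.span {SkewPoly.X θ ^ n - 1}).mkQ a
        ∈ Submodule.span (SkewPoly (DualNumber (ZMod p)) θ)
          {(Ideal.span {SkewPoly.X θ ^ n - 1}).mkQ a} :=
      Submodule.smul_mem _ _ (Submodule.mem_span_singleton_self _)
    by_cases hg0 : g = 0
    · have : (Ideal.span {SkewPoly.X θ ^ n - 1}).mkQ f
          = Q • (Ideal.span {SkewPoly.X θ ^ n - 1}).mkQ a := by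
        have h2 := hmkg
        rw [hg0, map_zero] at h2
        exact eq_of_sub_eq_zero h2.symm
      rw [this]
      exact hsmul_mem
    · have hgC : (Ideal.span {SkewPoly.X θ ^ n - 1}).mkQ g ∈ Code := by
        rw [hmkg]
        exact sub_mem hfC (Code.smul_mem _ haC)
      have hgdeg : degree g < (n : WithBot ℕ) := lt_trans hdg hfdeg
      have hgm : natDegree g < m := by
        have h1 : natDegree g < M := by
          apply Polynomial.natDegree_lt_natDegree (p := toP g) (q := toP f)
          · exact fun h => hg0 ((toP_eq_zero_iff g).mp h)
          · rw [← degree_eq, ← degree_eq]; exact hdg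
        omega
      have hspan := ih g hgm hgC hgdeg
      have : (Ideal.span {SkewPoly.X θ ^ n - 1}).mkQ f
          = (Ideal.span {SkewPoly.X θ ^ n - 1}).mkQ g
            + Q • (Ideal.span {SkewPoly.X θ ^ n - 1}).mkQ a := by
        rw [hmkg, sub_add_cancel]
      rw [this]
      exact add_mem hspan hsmul_mem

end Main
end SkewPoly

open SkewPoly DualNumber in
/-- If a nonzero skew cyclic code `C ⊆ R[x;θ]/⟨xⁿ-1⟩` contains no monic
polynomial and `a(x) = u·ā(x)` is of minimal degree in `C`, then
`C = ⟨u ā(x)⟩` and `ā(x) ∣ xⁿ - 1` in `F_p[x]`. -/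
theorem skew_code_no_monic_principal (p : ℕ) (hp : p.Prime) (hodd : p ≠ 2)
    (θ : RingAut (DualNumber (ZMod p))) (n : ℕ) (hn : 0 < n)
    (Code : Submodule (SkewPoly (DualNumber (ZMod p)) θ)
      (SkewPoly (DualNumber (ZMod p)) θ ⧸ Ideal.span {SkewPoly.X θ ^ n - 1}))
    (hC : Code ≠ ⊥)
    (hnomonic : ∀ f : SkewPoly (DualNumber (ZMod p)) θ,
      (Ideal.span {SkewPoly.X θ ^ n - 1}).mkQ f ∈ Code →
        SkewPoly.degree f < (n : WithBot ℕ) → ¬ SkewPoly.Monic f)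
    (abar : Polynomial (ZMod p))
    (a : SkewPoly (DualNumber (ZMod p)) θ)
    (ha : a = SkewPoly.C θ ε * SkewPoly.ofPoly θ abar) (ha0 : a ≠ 0)
    (haC : (Ideal.span {SkewPoly.X θ ^ n - 1}).mkQ a ∈ Code)
    (hadeg : SkewPoly.degree a < (n : WithBot ℕ))
    (hmin : ∀ b : SkewPoly (DualNumber (ZMod p)) θ,
      (Ideal.span {SkewPoly.X θ ^ n - 1}).mkQ b ∈ Code → b ≠ 0 →
        SkewPoly.degree b < (n : WithBot ℕ) → SkewPoly.degree a ≤ SkewPoly.degree b) :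
    Code = Submodule.span (SkewPoly (DualNumber (ZMod p)) θ)
        {(Ideal.span {SkewPoly.X θ ^ n - 1}).mkQ a} ∧
    abar ∣ (Polynomial.X ^ n - 1 : Polynomial (ZMod p)) := by
  haveI : Fact p.Prime := ⟨hp⟩
  obtain ⟨lam, hlne, hl⟩ := SkewPoly.exists_lam (θ := θ)
  have ha' : a = SkewPoly.umap θ abar := by rw [ha, SkewPoly.C_eps_mul_ofPoly]
  have habar0 : abar ≠ 0 := fun h => ha0 (by rw [ha', h, SkewPoly.umap_zero])
  have hdegaeq : SkewPoly.degree a = abar.degree := by rw [ha', SkewPoly.degree_umap]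
  constructor
  · apply le_antisymm
    · intro x hx
      obtain ⟨f0, rfl⟩ := (Ideal.span {SkewPoly.X θ ^ n - 1}).mkQ_surjective x
      obtain ⟨r, hmem, hrdeg⟩ := SkewPoly.exists_rep hn f0
      have hmk : (Ideal.span {SkewPoly.X θ ^ n - 1}).mkQ f0
          = (Ideal.span {SkewPoly.X θ ^ n - 1}).mkQ r := by
        rw [Submodule.mkQ_apply, Submodule.mkQ_apply]
        exact (Submodule.Quotient.eq _).mpr hmem
      rw [hmk] at hx ⊢
      exact SkewPoly.mem_span_of_mem_code hlne hl Code hnomonic abar a ha' ha0 haC hmin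
        (SkewPoly.natDegree r + 1) r (Nat.lt_succ_self _) hx hrdeg
    · rw [Submodule.span_le, Set.singleton_subset_iff]
      exact haC
  · have hlcabar : abar.leadingCoeff ≠ 0 := Polynomial.leadingCoeff_ne_zero.mpr habar0
    set abar' := abar * Polynomial.C abar.leadingCoeff⁻¹ with habar'
    have hmonic : abar'.Monic := Polynomial.monic_mul_leadingCoeff_inv habar0
    set q := (Polynomial.X ^ n - 1 : Polynomial (ZMod p)) /ₘ abar' with hqdef
    set r := (Polynomial.X ^ n - 1 : Polynomial (ZMod p)) %ₘ abar' with hrdef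
    have heq : r + abar' * q = Polynomial.X ^ n - 1 :=
      Polynomial.modByMonic_add_div _ abar'
    have hdegabar' : abar'.degree = abar.degree :=
      Polynomial.degree_mul_leadingCoeff_inv _ habar0
    have hrd : r.degree < abar.degree := by
      rw [← hdegabar']
      exact Polynomial.degree_modByMonic_lt _ hmonic
    have hrzero : r = 0 := by
      by_contra hr0
      have h1 : (Polynomial.X ^ n - 1 : Polynomial (ZMod p))
          = Polynomial.monomial n 1 - Polynomial.monomial 0 1 := by
        rw [Polynomial.X_pow_eq_monomial, Polynomial.monomial_zero_one]
      have h2 : SkewPoly.C θ ε * (SkewPoly.X θ ^ n)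
          = SkewPoly.ofFinsupp (Finsupp.single n (inr 1)) := by
        rw [SkewPoly.X_pow]
        show SkewPoly.ofFinsupp (Finsupp.single 0 (ε : DualNumber (ZMod p))) * _ = _
        rw [SkewPoly.single_mul_single, map_one, mul_one, zero_add]
        rfl
      have humapXn : SkewPoly.umap θ (Polynomial.X ^ n - 1)
          = SkewPoly.C θ ε * (SkewPoly.X θ ^ n - 1) := by
        rw [h1, SkewPoly.umap_sub, SkewPoly.umap_single, SkewPoly.umap_single, mul_sub,
          mul_one, h2]
        rfl
      have hXnspan : SkewPoly.C θ ε * (SkewPoly.X θ ^ n - 1)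
          ∈ Ideal.span {SkewPoly.X θ ^ n - 1} :=
        Submodule.mem_span_singleton.mpr ⟨SkewPoly.C θ ε, by rw [smul_eq_mul]⟩
      have hmk0 : (Ideal.span {SkewPoly.X θ ^ n - 1}).mkQ
          (SkewPoly.umap θ (Polynomial.X ^ n - 1)) = 0 := by
        rw [humapXn, Submodule.mkQ_apply]
        exact (Submodule.Quotient.mk_eq_zero _).mpr hXnspan
      obtain ⟨Q', hQ'⟩ := SkewPoly.exists_mul_umap hlne hl
        (Polynomial.C abar.leadingCoeff⁻¹ * q) abar
      have h3 : Polynomial.C abar.leadingCoeff⁻¹ * q * abar = abar' * q := by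
        rw [habar']; ring
      have h4 : SkewPoly.umap θ r = SkewPoly.umap θ (Polynomial.X ^ n - 1)
          - Q' * a := by
        rw [ha', hQ', h3, ← SkewPoly.umap_sub]
        congr 1
        rw [← heq]; ring
      have hmemr : (Ideal.span {SkewPoly.X θ ^ n - 1}).mkQ (SkewPoly.umap θ r) ∈ Code := by
        rw [h4, map_sub, hmk0, SkewPoly.mkQ_mul, zero_sub]
        exact neg_mem (Code.smul_mem _ haC)
      have hner : SkewPoly.umap θ r ≠ 0 :=
        fun h => hr0 ((SkewPoly.umap_eq_zero_iff r).mp h)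
      have hdegr : SkewPoly.degree (SkewPoly.umap θ r) < (n : WithBot ℕ) := by
        rw [SkewPoly.degree_umap]
        exact lt_trans (lt_of_lt_of_le hrd (le_of_eq hdegaeq.symm)) hadeg
      have := hmin (SkewPoly.umap θ r) hmemr hner hdegr
      rw [SkewPoly.degree_umap, hdegaeq] at this
      exact absurd (lt_of_le_of_lt this hrd) (lt_irrefl _)
    refine ⟨Polynomial.C abar.leadingCoeff⁻¹ * q, ?_⟩
    rw [← heq, hrzero, zero_add, habar']
    ring
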